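/- Let S be a semigroup and σ : S → S an involutive automorphism. The pairs f, g : S → ℂ with g ≠ 0 satisfying f(xy) + f(σ(y)x) = 2 f(x) g(y) for all x, y ∈ S are exactly the following: (1) f = 0 and g ≠ 0 arbitrary; (2) f = α χ + β χ* and g = (χ + χ*)/2, where χ : S → ℂ is a nonzero multiplicative function and α, β ∈ ℂ are constants with (α, β) ≠ (0, 0); (3) f = γ₁ χ + φ and g = χ, where γ₁ ∈ ℂ is a constant, χ : S → ℂ is a nonzero multiplicative function, and φ is a nonzero solution of the special sine addition law φ(xy) = φ(x)χ(y) + φ(y)χ(x) such that χ* = χ and φ* = −φ. -/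

import Mathlib

/-- Variant of Wilson's functional equation `f(xy) + f(σ(y)x) = 2 f(x) g(y)` on a
semigroup `S` with an involutive automorphism `σ`: description of all solution
pairs `(f, g)` with `g ≠ 0`. -/
theorem wilson_variant_solutions {S : Type*} [Semigroup S] (σ : S → S)
    (hσmul : ∀ x y : S, σ (x * y) = σ x * σ y) (hσinv : ∀ x : S, σ (σ x) = x)
    (f g : S → ℂ) (hg : g ≠ 0) :
    (∀ x y : S, f (x * y) + f (σ y * x) = 2 * f x * g y) ↔
      (f = 0) ∨
      (∃ (χ : S → ℂ) (α β : ℂ),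
        (∀ x y : S, χ (x * y) = χ x * χ y) ∧ χ ≠ 0 ∧ (α, β) ≠ (0, 0) ∧
        (∀ x : S, f x = α * χ x + β * χ (σ x)) ∧
        (∀ x : S, g x = (χ x + χ (σ x)) / 2)) ∨
      (∃ (χ φ : S → ℂ) (γ₁ : ℂ),
        (∀ x y : S, χ (x * y) = χ x * χ y) ∧ χ ≠ 0 ∧
        φ ≠ 0 ∧ (∀ x y : S, φ (x * y) = φ x * χ y + φ y * χ x) ∧
        (∀ x : S, χ (σ x) = χ x) ∧ (∀ x : S, φ (σ x) = -φ x) ∧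
        (∀ x : S, f x = γ₁ * χ x + φ x) ∧ g = χ) := by
  constructor
  · intro hE
    by_cases hf : f = 0
    · exact Or.inl hf
    right
    obtain ⟨a, ha⟩ := Function.ne_iff.mp hf
    obtain ⟨b, hb⟩ := Function.ne_iff.mp hg
    simp only [Pi.zero_apply] at ha hb
    -- the fundamental "Kannappan-type" identity
    have hKey : ∀ x y z : S,
        f (x * y * z) = f (x * y) * g z + f (x * z) * g y
          + f x * (g (y * z) - 2 * g y * g z) := by
      intro x y z
      have e1 := hE (x * y) z
      have e2 := hE x (y * z)
      have e3 := hE x z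
      have e4 := hE (σ z * x) y
      rw [hσmul] at e2
      simp only [mul_assoc] at e1 e2 e3 e4 ⊢
      linear_combination (e1 - e4 + e2 - 2 * g y * e3) / 2
    -- the rank-one identity
    have hStar : ∀ x y z w : S,
        (f (x * y) - f x * g y) * (g (z * w) - g z * g w)
          = (f (x * w) - f x * g w) * (g (y * z) - g y * g z) := by
      intro x y z w
      have k1 := hKey x y (z * w)
      have k2 := hKey x z w
      have k3 := hKey x (y * z) w
      have k4 := hKey x y z
      simp only [mul_assoc] at k1 k2 k3 k4
      linear_combination k3 - k1 - g y * k2 + g w * k4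
    by_cases hmul0 : ∀ x y : S, f (x * y) = f x * g y
    · -- Case I : f(xy) = f(x) g(y); then g is multiplicative and f = c·g
      have hfs : ∀ x y : S, f (σ y) * g x = f x * g y := by
        intro x y
        have e := hE x y
        rw [hmul0 x y, hmul0 (σ y) x] at e
        linear_combination e
      have hc : ∀ y, f (σ y) = f b / g b * g y := by
        intro y
        have e := hfs b y
        field_simp
        linear_combination e
      have hfx : ∀ x, f x = f b / g b * g (σ x) := by
        intro x
        have := hc (σ x)
        rwa [hσinv] at this
      have hcne : f b / g b ≠ 0 := by
        intro h
        apply ha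
        rw [hfx a, h, zero_mul]
      have hgσ : ∀ x, g (σ x) = g x := by
        intro x
        have e0 := hfs x b
        rw [hc b, hfx x] at e0
        have e : f b / g b * (g b * g x) = f b / g b * (g (σ x) * g b) := by
          linear_combination e0
        have e1 := mul_left_cancel₀ hcne e
        rw [mul_comm (g (σ x)) (g b)] at e1
        exact (mul_left_cancel₀ hb e1).symm
      have hgmul : ∀ x y, g (x * y) = g x * g y := by
        intro x y
        have e := hmul0 x y
        rw [hfx (x * y), hfx x, hgσ, hgσ] at e
        rw [mul_assoc] at e
        exact mul_left_cancel₀ hcne e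
      refine Or.inl ⟨g, f b / g b, 0, hgmul, hg, ?_, ?_, ?_⟩
      · intro hp
        exact hcne (by simpa using congrArg Prod.fst hp)
      · intro x
        rw [hfx x, hgσ x]; ring
      · intro x
        rw [hgσ x]; ring
    · -- Case II
      push_neg at hmul0
      obtain ⟨x₀, y₀, hxy₀⟩ := hmul0
      set φ : S → ℂ := fun y => f (x₀ * y) - f x₀ * g y with hφd
      clear_value φ
      have hφy₀ : φ y₀ ≠ 0 := by
        simp only [hφd]
        exact sub_ne_zero.mpr hxy₀
      have hφsine : ∀ y z, φ (y * z) = φ y * g z + φ z * g y := by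
        intro y z
        simp only [hφd]
        have k := hKey x₀ y z
        rw [mul_assoc] at k
        linear_combination k
      by_cases hgm : ∀ y z : S, g (y * z) = g y * g z
      · -- Subcase II.a : g multiplicative; leads to the "sine" case (3)
        have hP : ∀ x y z : S,
            f (x * y * z) - f (x * y) * g z = (f (x * z) - f x * g z) * g y := by
          intro x y z
          have k := hKey x y z
          rw [hgm y z] at k
          linear_combination k
        have hQ : ∀ x y z : S,
            f (σ y * x * z) - f (σ y * x) * g z = (f (x * z) - f x * g z) * g y := by
          intro x y z
          have e2 := hE (x * z) y
          have k := hKey x z y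
          rw [hgm z y] at k
          have e1 := hE x y
          rw [mul_assoc (σ y) x z]
          linear_combination e2 - k - g z * e1
        have hR : ∀ u x z : S,
            g (σ u) * (f (x * z) - f x * g z) = g x * (f (u * z) - f u * g z) := by
          intro u x z
          have h1 := hP u x z
          have h2 := hQ x (σ u) z
          rw [hσinv] at h2
          linear_combination h1 - h2
        set ψ : S → ℂ := fun z => (f (σ b * z) - f (σ b) * g z) / g b with hψd
        clear_value ψ
        have hΦ : ∀ x z, f (x * z) - f x * g z = g x * ψ z := by
          intro x z
          have e := hR (σ b) x z
          rw [hσinv] at e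
          simp only [hψd]
          field_simp
          linear_combination e
        have h0 : f (x₀ * y₀) - f x₀ * g y₀ ≠ 0 := sub_ne_zero.mpr hxy₀
        rw [hΦ x₀ y₀] at h0
        obtain ⟨hgx₀, hψy₀⟩ := mul_ne_zero_iff.mp h0
        have hgσ2 : ∀ u, g (σ u) = g u := by
          intro u
          have e := hR u x₀ y₀
          rw [hΦ x₀ y₀, hΦ u y₀] at e
          have e2 : g x₀ * ψ y₀ * g (σ u) = g x₀ * ψ y₀ * g u := by
            linear_combination e
          exact mul_left_cancel₀ (mul_ne_zero hgx₀ hψy₀) e2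
        have hψm : ∀ y z, (f (σ b * (y * z)) - f (σ b) * g (y * z))
            = (f (σ b * y) - f (σ b) * g y) * g z
              + (f (σ b * z) - f (σ b) * g z) * g y := by
          intro y z
          have k := hKey (σ b) y z
          rw [mul_assoc] at k
          linear_combination k
        have hψsine : ∀ y z, ψ (y * z) = ψ y * g z + ψ z * g y := by
          intro y z
          simp only [hψd]
          field_simp
          linear_combination hψm y z
        have hXg : ∀ x y, (f (σ y) + ψ y) * g x = (f x - ψ x) * g y := by
          intro x y
          have e := hE x y
          rw [show f (x * y) = f x * g y + g x * ψ y by linear_combination hΦ x y] at e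
          rw [show f (σ y * x) = f (σ y) * g x + g (σ y) * ψ x by
            linear_combination hΦ (σ y) x] at e
          rw [hgσ2 y] at e
          linear_combination e
        have hγ : ∀ y, f (σ y) + ψ y = (f b - ψ b) / g b * g y := by
          intro y
          have e := hXg b y
          field_simp
          linear_combination e
        have hfform : ∀ x, f x = (f b - ψ b) / g b * g x + ψ x := by
          intro x
          have e := hXg x b
          rw [hγ b] at e
          have e2 : ((f b - ψ b) / g b * g x) * g b = (f x - ψ x) * g b := by
            linear_combination e
          have e3 := mul_right_cancel₀ hb e2
          linear_combination -e3
        have hψσ : ∀ x, ψ (σ x) = -ψ x := by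
          intro x
          have e := hγ (σ x)
          rw [hσinv, hgσ2 x] at e
          have e2 := hfform x
          linear_combination e - e2
        refine Or.inr ⟨g, ψ, (f b - ψ b) / g b, hgm, hg, ?_, hψsine, hgσ2, hψσ, hfform, rfl⟩
        intro h
        apply hψy₀
        rw [h]
        simp
      · -- Subcase II.b : g not multiplicative; leads to case (2)
        push_neg at hgm
        obtain ⟨z₁, w₁, hΨ₁⟩ := hgm
        have hΨ₁' : g (z₁ * w₁) - g z₁ * g w₁ ≠ 0 := sub_ne_zero.mpr hΨ₁
        have hne : (f (x₀ * w₁) - f x₀ * g w₁) * (g (y₀ * z₁) - g y₀ * g z₁) ≠ 0 := by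
          rw [← hStar x₀ y₀ z₁ w₁]
          exact mul_ne_zero (sub_ne_zero.mpr hxy₀) hΨ₁'
        have hφw₁ : φ w₁ ≠ 0 := by
          simp only [hφd]
          exact (mul_ne_zero_iff.mp hne).1
        have hA1 : ∀ y z, φ y * (g (z * w₁) - g z * g w₁)
            = φ w₁ * (g (y * z) - g y * g z) := by
          intro y z
          simp only [hφd]
          exact hStar x₀ y z w₁
        set μ : ℂ := (g (w₁ * w₁) - g w₁ * g w₁) / (φ w₁ * φ w₁) with hμd
        clear_value μ
        have hμval : μ * (φ w₁ * φ w₁) = g (w₁ * w₁) - g w₁ * g w₁ := by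
          rw [hμd]
          exact div_mul_cancel₀ _ (mul_ne_zero hφw₁ hφw₁)
        have hΨ : ∀ y z, g (y * z) - g y * g z = μ * φ y * φ z := by
          intro y z
          have e1 := hA1 y z
          have e2 := hA1 z w₁
          have key : (g (y * z) - g y * g z) * (φ w₁ * φ w₁)
              = μ * φ y * φ z * (φ w₁ * φ w₁) := by
            linear_combination (-(φ w₁) * e1) - φ y * e2 - φ y * φ z * hμval
          exact mul_right_cancel₀ (mul_ne_zero hφw₁ hφw₁) key
        have hμ0 : μ ≠ 0 := by
          intro h
          apply hΨ₁'
          rw [hΨ z₁ w₁, h]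
          ring
        have hφz₁ : φ z₁ ≠ 0 := by
          intro h
          apply hΨ₁'
          rw [hΨ z₁ w₁, h]
          ring
        set c : S → ℂ := fun x => (f (x * w₁) - f x * g w₁) / φ w₁ with hcd
        clear_value c
        have hF : ∀ x y, f (x * y) = f x * g y + c x * φ y := by
          intro x y
          have e := hStar x y z₁ w₁
          rw [hΨ z₁ w₁, hΨ y z₁] at e
          have e3 : (f (x * y) - f x * g y) * φ w₁
              = (f (x * w₁) - f x * g w₁) * φ y := by
            have h2 : (f (x * y) - f x * g y) * φ w₁ * (μ * φ z₁)
                = (f (x * w₁) - f x * g w₁) * φ y * (μ * φ z₁) := by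
              linear_combination e
            exact mul_right_cancel₀ (mul_ne_zero hμ0 hφz₁) h2
          simp only [hcd]
          field_simp
          linear_combination e3
        have hC : ∀ x y, c (x * y) = μ * f x * φ y + c x * g y := by
          intro x y
          have h1 := hF (x * y) w₁
          have h2 := hF x (y * w₁)
          rw [← mul_assoc] at h2
          have h3 := hF x y
          have h4 := hφsine y w₁
          have h5 := hΨ y w₁
          have key : c (x * y) * φ w₁ = (μ * f x * φ y + c x * g y) * φ w₁ := by
            linear_combination -h1 + h2 - g w₁ * h3 + c x * h4 + f x * h5
          exact mul_right_cancel₀ hφw₁ key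
        obtain ⟨ν, hν⟩ : ∃ ν : ℂ, ν ^ 2 = μ :=
          IsAlgClosed.exists_pow_nat_eq μ (by norm_num)
        have hν0 : ν ≠ 0 := by
          intro h
          rw [h] at hν
          apply hμ0
          rw [← hν]
          ring
        have h2ν : (2 : ℂ) * ν ≠ 0 := mul_ne_zero two_ne_zero hν0
        have hcancel : ∀ m t : ℂ, m ≠ 0 → (2 * ν * m)⁻¹ * (m * (2 * ν * t)) = t := by
          intro m t hm
          field_simp
        have hcancel2 : ∀ m t : ℂ, m ≠ 0 → (2 * ν * m)⁻¹ * (m * t) = t / (2 * ν) := by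
          intro m t hm
          field_simp
        set χ₁ : S → ℂ := fun x => g x + ν * φ x with hχ₁d
        clear_value χ₁
        set χ₂ : S → ℂ := fun x => g x - ν * φ x with hχ₂d
        clear_value χ₂
        set A : S → ℂ := fun x => ν * f x + c x with hAd
        clear_value A
        set B : S → ℂ := fun x => ν * f x - c x with hBd
        clear_value B
        have hχ₁m : ∀ x y, χ₁ (x * y) = χ₁ x * χ₁ y := by
          intro x y
          simp only [hχ₁d]
          linear_combination hΨ x y + ν * hφsine x y - φ x * φ y * hν
        have hχ₂m : ∀ x y, χ₂ (x * y) = χ₂ x * χ₂ y := by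
          intro x y
          simp only [hχ₂d]
          linear_combination hΨ x y - ν * hφsine x y - φ x * φ y * hν
        have hAm : ∀ x y, A (x * y) = A x * χ₁ y := by
          intro x y
          simp only [hAd, hχ₁d]
          linear_combination ν * hF x y + hC x y - f x * φ y * hν
        have hBm : ∀ x y, B (x * y) = B x * χ₂ y := by
          intro x y
          simp only [hBd, hχ₂d]
          linear_combination ν * hF x y - hC x y + f x * φ y * hν
        have hZ : ∀ x y, A (σ y) * χ₁ x + B (σ y) * χ₂ x = A x * χ₂ y + B x * χ₁ y := by
          intro x y
          simp only [hAd, hBd, hχ₁d, hχ₂d]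
          linear_combination 2 * ν * hE x y - 2 * ν * hF x y - 2 * ν * hF (σ y) x
        have hsne : χ₂ y₀ - χ₁ y₀ ≠ 0 := by
          have h : χ₂ y₀ - χ₁ y₀ = -(2 * ν * φ y₀) := by
            simp only [hχ₁d, hχ₂d]; ring
          rw [h]
          exact neg_ne_zero.mpr (mul_ne_zero (mul_ne_zero two_ne_zero hν0) hφy₀)
        have hsne' : χ₁ y₀ - χ₂ y₀ ≠ 0 := by
          intro h
          apply hsne
          linear_combination -h
        have hI₁ : ∀ x y, B (σ y) * χ₂ x = B x * χ₁ y := by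
          intro x y
          have h1 := hZ (x * y₀) y
          rw [hχ₁m x y₀, hχ₂m x y₀, hAm x y₀, hBm x y₀] at h1
          have h2 := hZ x y
          have key : B (σ y) * χ₂ x * (χ₂ y₀ - χ₁ y₀)
              = B x * χ₁ y * (χ₂ y₀ - χ₁ y₀) := by
            linear_combination h1 - χ₁ y₀ * h2
          exact mul_right_cancel₀ hsne key
        have hI₂ : ∀ x y, A (σ y) * χ₁ x = A x * χ₂ y := by
          intro x y
          have h1 := hZ (x * y₀) y
          rw [hχ₁m x y₀, hχ₂m x y₀, hAm x y₀, hBm x y₀] at h1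
          have h2 := hZ x y
          have key : A (σ y) * χ₁ x * (χ₁ y₀ - χ₂ y₀)
              = A x * χ₂ y * (χ₁ y₀ - χ₂ y₀) := by
            linear_combination h1 - χ₂ y₀ * h2
          exact mul_right_cancel₀ hsne' key
        have hgχ : ∀ x, g x = (χ₁ x + χ₂ x) / 2 := by
          intro x
          simp only [hχ₁d, hχ₂d]
          ring
        by_cases hA0 : ∀ x, A x = 0
        · -- f is a multiple of χ₂ = χ₁ ∘ σ
          have hBa : B a ≠ 0 := by
            have h := hA0 a
            simp only [hAd] at h
            simp only [hBd]
            intro h2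
            apply ha
            have h3 : 2 * ν * f a = 0 := by linear_combination h + h2
            rcases mul_eq_zero.mp h3 with h4 | h4
            · exact absurd h4 (mul_ne_zero two_ne_zero hν0)
            · exact h4
          have hχ₂a : χ₂ a ≠ 0 := by
            intro h0
            have hχ₁0 : ∀ y, χ₁ y = 0 := by
              intro y
              have h := hI₁ a y
              rw [h0, mul_zero] at h
              exact ((mul_eq_zero.mp h.symm).resolve_left hBa)
            have hχ₂0 : ∀ x, χ₂ x = 0 := by
              intro x
              have h := hI₁ x (σ a)
              rw [hσinv, hχ₁0 (σ a), mul_zero] at h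
              exact ((mul_eq_zero.mp h).resolve_left hBa)
            apply hb
            rw [hgχ b, hχ₁0 b, hχ₂0 b]
            norm_num
          have hη0 : χ₂ a / B a ≠ 0 := div_ne_zero hχ₂a hBa
          have hχ₁B : ∀ y, χ₁ y = χ₂ a / B a * B (σ y) := by
            intro y
            have h := hI₁ a y
            field_simp
            linear_combination -h
          have hχ₂B : ∀ x, χ₂ x = χ₂ a / B a * B x := by
            intro x
            have h1 := hI₁ x (σ a)
            rw [hσinv, hχ₁B (σ a), hσinv] at h1
            have h2 : B a * χ₂ x = B a * (χ₂ a / B a * B x) := by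
              field_simp at h1 ⊢
              linear_combination h1
            exact mul_left_cancel₀ hBa h2
          have hβ0 : (2 * ν * (χ₂ a / B a))⁻¹ ≠ 0 :=
            inv_ne_zero (mul_ne_zero (mul_ne_zero two_ne_zero hν0) hη0)
          refine Or.inl ⟨χ₁, 0, (2 * ν * (χ₂ a / B a))⁻¹, hχ₁m, ?_, ?_, ?_, ?_⟩
          · intro h
            have : χ₁ (σ a) = 0 := by rw [h]; simp
            rw [hχ₁B (σ a), hσinv] at this
            exact (mul_ne_zero hη0 hBa) this
          · intro hp
            exact hβ0 (by simpa using congrArg Prod.snd hp)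
          · intro x
            have e1 : χ₁ (σ x) = χ₂ a / B a * B x := by
              rw [hχ₁B (σ x), hσinv]
            have e2 : B x = 2 * ν * f x := by
              have h := hA0 x
              simp only [hAd] at h
              simp only [hBd]
              linear_combination -h
            rw [e1, e2, hcancel _ _ hη0]
            ring
          · intro x
            have e1 : χ₁ (σ x) = χ₂ x := by
              rw [hχ₁B (σ x), hσinv, ← hχ₂B x]
            rw [e1, hgχ x]
        · push_neg at hA0
          obtain ⟨x₁, hAx₁⟩ := hA0
          have hχ₁x₁ : χ₁ x₁ ≠ 0 := by
            intro h0
            have hχ₂0 : ∀ y, χ₂ y = 0 := by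
              intro y
              have h := hI₂ x₁ y
              rw [h0, mul_zero] at h
              exact ((mul_eq_zero.mp h.symm).resolve_left hAx₁)
            have hχ₁0 : ∀ x, χ₁ x = 0 := by
              intro x
              have h := hI₂ x (σ x₁)
              rw [hσinv, hχ₂0 (σ x₁), mul_zero] at h
              exact ((mul_eq_zero.mp h).resolve_left hAx₁)
            apply hb
            rw [hgχ b, hχ₁0 b, hχ₂0 b]
            norm_num
          have hr0 : χ₁ x₁ / A x₁ ≠ 0 := div_ne_zero hχ₁x₁ hAx₁
          have hχ₂A : ∀ y, χ₂ y = χ₁ x₁ / A x₁ * A (σ y) := by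
            intro y
            have h := hI₂ x₁ y
            field_simp
            linear_combination -h
          have hχ₁A : ∀ x, χ₁ x = χ₁ x₁ / A x₁ * A x := by
            intro x
            have h1 := hI₂ x (σ x₁)
            rw [hσinv, hχ₂A (σ x₁), hσinv] at h1
            have h2 : A x₁ * χ₁ x = A x₁ * (χ₁ x₁ / A x₁ * A x) := by
              field_simp at h1 ⊢
              linear_combination h1
            exact mul_left_cancel₀ hAx₁ h2
          have hχσ : ∀ x, χ₁ (σ x) = χ₂ x := by
            intro x
            rw [hχ₁A (σ x), hχ₂A x]
          have hα0 : (2 * ν * (χ₁ x₁ / A x₁))⁻¹ ≠ 0 :=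
            inv_ne_zero (mul_ne_zero (mul_ne_zero two_ne_zero hν0) hr0)
          by_cases hB0 : ∀ x, B x = 0
          · refine Or.inl ⟨χ₁, (2 * ν * (χ₁ x₁ / A x₁))⁻¹, 0, hχ₁m, ?_, ?_, ?_, ?_⟩
            · intro h
              apply hχ₁x₁
              rw [h]; simp
            · intro hp
              exact hα0 (by simpa using congrArg Prod.fst hp)
            · intro x
              have e2 : A x = 2 * ν * f x := by
                have h := hB0 x
                simp only [hBd] at h
                simp only [hAd]
                linear_combination -h
              rw [hχ₁A x, e2, hcancel _ _ hr0]
              ring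
            · intro x
              rw [hχσ x, hgχ x]
          · push_neg at hB0
            obtain ⟨x₂, hBx₂⟩ := hB0
            have hχ₂x₂ : χ₂ x₂ ≠ 0 := by
              intro h0
              have hχ₁0 : ∀ y, χ₁ y = 0 := by
                intro y
                have h := hI₁ x₂ y
                rw [h0, mul_zero] at h
                exact ((mul_eq_zero.mp h.symm).resolve_left hBx₂)
              exact hχ₁x₁ (hχ₁0 x₁)
            have hs0 : χ₂ x₂ / B x₂ ≠ 0 := div_ne_zero hχ₂x₂ hBx₂
            have hχ₁B : ∀ y, χ₁ y = χ₂ x₂ / B x₂ * B (σ y) := by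
              intro y
              have h := hI₁ x₂ y
              field_simp
              linear_combination -h
            have hχ₂B : ∀ x, χ₂ x = χ₂ x₂ / B x₂ * B x := by
              intro x
              have h1 := hI₁ x (σ x₂)
              rw [hσinv, hχ₁B (σ x₂), hσinv] at h1
              have h2 : B x₂ * χ₂ x = B x₂ * (χ₂ x₂ / B x₂ * B x) := by
                field_simp at h1 ⊢
                linear_combination h1
              exact mul_left_cancel₀ hBx₂ h2
            have hβ0 : (2 * ν * (χ₂ x₂ / B x₂))⁻¹ ≠ 0 :=
              inv_ne_zero (mul_ne_zero (mul_ne_zero two_ne_zero hν0) hs0)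
            refine Or.inl ⟨χ₁, (2 * ν * (χ₁ x₁ / A x₁))⁻¹,
              (2 * ν * (χ₂ x₂ / B x₂))⁻¹, hχ₁m, ?_, ?_, ?_, ?_⟩
            · intro h
              apply hχ₁x₁
              rw [h]; simp
            · intro hp
              exact hα0 (by simpa using congrArg Prod.fst hp)
            · intro x
              have e1 : χ₁ (σ x) = χ₂ x₂ / B x₂ * B x := by
                rw [hχ₁B (σ x), hσinv]
              have e2 : A x + B x = 2 * ν * f x := by
                simp only [hAd, hBd]; ring
              rw [hχ₁A x, e1, hcancel2 _ _ hr0, hcancel2 _ _ hs0,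
                ← add_div, e2, mul_div_cancel_left₀ _ h2ν]
            · intro x
              rw [hχσ x, hgχ x]
  · rintro (hf | ⟨χ, α, β, hχ, hχ0, hαβ, hfx, hgx⟩ |
      ⟨χ, φ, γ, hχ, hχ0, hφ0, hφadd, hχσ, hφσ, hfx, hgx⟩) <;> intro x y
    · simp [hf]
    · simp only [hfx, hgx, hχ, hσmul, hσinv]
      ring
    · subst hgx
      simp only [hfx, hφadd, hχ, hσmul, hσinv, hχσ, hφσ]
      ring
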